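/- arXiv:1711.01389 — 2 statements merged into one kernel-verified Lean document; each statement's English description precedes it below -/
import Mathlib

section
/- For any q > -1 there exist constants c₁(q), c₂(q) > 0 such that for all ξ, η ∈ ℝ^k, c₁(q)(1 + |ξ| + |η|)^q ≤ ∫₀¹ (1 + |ξ + tη|)^q dt ≤ c₂(q)(1 + |ξ| + |η|)^q. -/
open Real

open MeasureTheory

private lemma int_affine {q : ℝ} (hq : -1 < q) {N : ℝ} (hN : N ≠ 0) (d a b : ℝ) :
    ∫ t in a..b, (N * t + d) ^ q =
      ((N * b + d) ^ (q + 1) - (N * a + d) ^ (q + 1)) / (N * (q + 1)) := by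
  rw [intervalIntegral.integral_comp_mul_add (fun x => x ^ q) hN d,
      integral_rpow (Or.inl hq), smul_eq_mul]
  have h1 : q + 1 ≠ 0 := by linarith
  field_simp

private lemma lower_sub {f : ℝ → ℝ} (hf : Continuous f) (h0 : ∀ t, 0 ≤ f t) {a b c : ℝ}
    (ha : 0 ≤ a) (hab : a ≤ b) (hb : b ≤ 1) (hc : ∀ t ∈ Set.Icc a b, c ≤ f t) :
    (b - a) * c ≤ ∫ t in (0:ℝ)..1, f t := by
  have hi : ∀ u v : ℝ, IntervalIntegrable f volume u v := fun u v => hf.intervalIntegrable u v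
  calc (b - a) * c = ∫ _t in a..b, c := by
        rw [intervalIntegral.integral_const, smul_eq_mul]
    _ ≤ ∫ t in a..b, f t :=
        intervalIntegral.integral_mono_on hab intervalIntegrable_const (hi a b) hc
    _ ≤ ∫ t in (0:ℝ)..1, f t :=
        intervalIntegral.integral_mono_interval ha hab hb (ae_of_all _ h0) (hi 0 1)

set_option maxHeartbeats 2000000 in
theorem stmt_4 (k : ℕ) (q : ℝ) (hq : -1 < q) :
    ∃ c₁ c₂ : ℝ, 0 < c₁ ∧ 0 < c₂ ∧
      ∀ ξ η : EuclideanSpace ℝ (Fin k),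
        c₁ * (1 + ‖ξ‖ + ‖η‖) ^ q ≤ (∫ t in (0:ℝ)..1, (1 + ‖ξ + t • η‖) ^ q) ∧
        (∫ t in (0:ℝ)..1, (1 + ‖ξ + t • η‖) ^ q) ≤ c₂ * (1 + ‖ξ‖ + ‖η‖) ^ q := by
  have hq1 : (0:ℝ) < q + 1 := by linarith
  rcases le_or_gt 0 q with hq0 | hq0
  · -- case q ≥ 0
    refine ⟨(1/8) * (4:ℝ) ^ (-q), 1, by positivity, one_pos, fun ξ η => ?_⟩
    set r := ‖ξ‖ with hrdef
    set N := ‖η‖ with hNdef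
    have hr : 0 ≤ r := norm_nonneg ξ
    have hN : 0 ≤ N := norm_nonneg η
    have hA : (0:ℝ) < 1 + r + N := by linarith
    have hsm : ∀ t : ℝ, 0 ≤ t → ‖t • η‖ = t * N := fun t ht => by
      rw [norm_smul, Real.norm_eq_abs, abs_of_nonneg ht]
    have hgc : Continuous fun t : ℝ => 1 + ‖ξ + t • η‖ :=
      continuous_const.add ((continuous_const.add (continuous_id.smul continuous_const)).norm)
    have hfc : Continuous fun t : ℝ => (1 + ‖ξ + t • η‖) ^ q :=
      hgc.rpow_const fun t => Or.inl (by positivity)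
    have hnn : ∀ t : ℝ, 0 ≤ (1 + ‖ξ + t • η‖) ^ q :=
      fun t => Real.rpow_nonneg (by positivity) q
    have key1 : ∀ t : ℝ, 0 ≤ t → t ≤ 1 → ‖ξ + t • η‖ ≤ r + N := by
      intro t ht ht1
      calc ‖ξ + t • η‖ ≤ ‖ξ‖ + ‖t • η‖ := norm_add_le _ _
        _ = r + t * N := by rw [hsm t ht]
        _ ≤ r + N := by nlinarith
    have key2 : ∀ t : ℝ, 0 ≤ t → r - t * N ≤ ‖ξ + t • η‖ := by
      intro t ht
      have h1 : ‖ξ‖ ≤ ‖ξ + t • η‖ + ‖t • η‖ := by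
        calc ‖ξ‖ = ‖(ξ + t • η) - t • η‖ := by rw [add_sub_cancel_right]
          _ ≤ _ := norm_sub_le _ _
      rw [hsm t ht] at h1; linarith
    constructor
    · -- lower bound
      have hkey : ∃ a : ℝ, 0 ≤ a ∧ a + 1/8 ≤ 1 ∧ ∀ t ∈ Set.Icc a (a + 1/8),
          (1 + r + N)/4 ≤ 1 + ‖ξ + t • η‖ := by
        rcases le_total ‖ξ + η‖ r with hc | hc
        · refine ⟨0, le_refl _, by norm_num, fun t ht => ?_⟩
          have hη : ‖η‖ ≤ ‖ξ + η‖ + ‖ξ‖ := by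
            calc ‖η‖ = ‖(ξ + η) - ξ‖ := by rw [add_sub_cancel_left]
              _ ≤ _ := norm_sub_le _ _
          have hN2 : N ≤ 2 * r := by rw [hNdef, hrdef]; linarith
          have h2 := key2 t ht.1
          have ht2 : t ≤ 1/8 := by simpa using ht.2
          nlinarith [ht.1, mul_le_mul_of_nonneg_right ht2 hN]
        · refine ⟨7/8, by norm_num, by norm_num, fun t ht => ?_⟩
          have hη : ‖η‖ ≤ ‖ξ + η‖ + ‖ξ‖ := by
            calc ‖η‖ = ‖(ξ + η) - ξ‖ := by rw [add_sub_cancel_left]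
              _ ≤ _ := norm_sub_le _ _
          have hN2 : N ≤ 2 * ‖ξ + η‖ := by rw [hNdef]; linarith
          have ht1 : t ≤ 1 := by
            have := ht.2; linarith
          have h2 : ‖ξ + η‖ - (1 - t) * N ≤ ‖ξ + t • η‖ := by
            have heq : ξ + η = (ξ + t • η) + (1 - t) • η := by
              rw [sub_smul, one_smul]; abel
            have h3 : ‖ξ + η‖ ≤ ‖ξ + t • η‖ + ‖(1 - t) • η‖ := by
              rw [heq]; exact norm_add_le _ _
            rw [hsm (1 - t) (by linarith)] at h3; linarith
          have ht78 : (7:ℝ)/8 ≤ t := ht.1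
          have hrs : r ≤ ‖ξ + η‖ := hc
          nlinarith [mul_le_mul_of_nonneg_right (by linarith : 1 - t ≤ 1/8) hN]
      obtain ⟨a, ha0, ha1, hbound⟩ := hkey
      have hlow : ((a + 1/8) - a) * ((1 + r + N)/4) ^ q ≤
          ∫ t in (0:ℝ)..1, (1 + ‖ξ + t • η‖) ^ q :=
        lower_sub hfc hnn ha0 (by linarith) ha1 (fun t ht =>
          Real.rpow_le_rpow (by positivity) (hbound t ht) hq0)
      have heq4 : ((1 + r + N)/4) ^ q = (4:ℝ) ^ (-q) * (1 + r + N) ^ q := by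
        rw [Real.div_rpow hA.le (by norm_num), Real.rpow_neg (by norm_num)]
        ring
      calc (1/8) * (4:ℝ) ^ (-q) * (1 + r + N) ^ q
          = ((a + 1/8) - a) * ((1 + r + N)/4) ^ q := by rw [heq4]; ring
        _ ≤ _ := hlow
    · -- upper bound
      have hle : ∀ t ∈ Set.Icc (0:ℝ) 1, (1 + ‖ξ + t • η‖) ^ q ≤ (1 + r + N) ^ q := by
        intro t ht
        exact Real.rpow_le_rpow (by positivity)
          (by have := key1 t ht.1 ht.2; linarith) hq0
      calc (∫ t in (0:ℝ)..1, (1 + ‖ξ + t • η‖) ^ q)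
          ≤ ∫ _t in (0:ℝ)..1, (1 + r + N) ^ q :=
            intervalIntegral.integral_mono_on zero_le_one (hfc.intervalIntegrable _ _)
              intervalIntegrable_const hle
        _ = 1 * (1 + r + N) ^ q := by
            rw [intervalIntegral.integral_const, smul_eq_mul]; ring
  · -- case q < 0
    refine ⟨1, (3:ℝ) ^ (-q) + (4:ℝ) ^ (-q) + 8/(q+1), one_pos, by positivity, fun ξ η => ?_⟩
    set r := ‖ξ‖ with hrdef
    set N := ‖η‖ with hNdef
    have hr : 0 ≤ r := norm_nonneg ξ
    have hN : 0 ≤ N := norm_nonneg η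
    have hA : (0:ℝ) < 1 + r + N := by linarith
    have hsm : ∀ t : ℝ, 0 ≤ t → ‖t • η‖ = t * N := fun t ht => by
      rw [norm_smul, Real.norm_eq_abs, abs_of_nonneg ht]
    have hgc : Continuous fun t : ℝ => 1 + ‖ξ + t • η‖ :=
      continuous_const.add ((continuous_const.add (continuous_id.smul continuous_const)).norm)
    have hfc : Continuous fun t : ℝ => (1 + ‖ξ + t • η‖) ^ q :=
      hgc.rpow_const fun t => Or.inl (by positivity)
    have key1 : ∀ t : ℝ, 0 ≤ t → t ≤ 1 → ‖ξ + t • η‖ ≤ r + N := by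
      intro t ht ht1
      calc ‖ξ + t • η‖ ≤ ‖ξ‖ + ‖t • η‖ := norm_add_le _ _
        _ = r + t * N := by rw [hsm t ht]
        _ ≤ r + N := by nlinarith
    have key2 : ∀ t : ℝ, 0 ≤ t → r - t * N ≤ ‖ξ + t • η‖ := by
      intro t ht
      have h1 : ‖ξ‖ ≤ ‖ξ + t • η‖ + ‖t • η‖ := by
        calc ‖ξ‖ = ‖(ξ + t • η) - t • η‖ := by rw [add_sub_cancel_right]
          _ ≤ _ := norm_sub_le _ _
      rw [hsm t ht] at h1; linarith
    have key3 : ∀ t : ℝ, 0 ≤ t → t * N - r ≤ ‖ξ + t • η‖ := by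
      intro t ht
      have h1 : ‖t • η‖ ≤ ‖ξ + t • η‖ + ‖ξ‖ := by
        calc ‖t • η‖ = ‖(ξ + t • η) - ξ‖ := by rw [add_sub_cancel_left]
          _ ≤ _ := norm_sub_le _ _
      rw [hsm t ht] at h1; linarith
    have hPq : 0 < (1 + r + N) ^ q := Real.rpow_pos_of_pos hA q
    have h3q : 0 < (3:ℝ) ^ (-q) := Real.rpow_pos_of_pos (by norm_num) _
    have h4q : 0 < (4:ℝ) ^ (-q) := Real.rpow_pos_of_pos (by norm_num) _
    have h8q : 0 < 8/(q+1) := by positivity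
    constructor
    · -- lower bound, c₁ = 1
      have hle : ∀ t ∈ Set.Icc (0:ℝ) 1,
          ((1:ℝ) + r + N) ^ q ≤ (1 + ‖ξ + t • η‖) ^ q := fun t ht =>
        Real.rpow_le_rpow_of_nonpos (by positivity)
          (by have := key1 t ht.1 ht.2; linarith) hq0.le
      calc 1 * (1 + r + N) ^ q = ∫ _t in (0:ℝ)..1, (1 + r + N) ^ q := by
            rw [intervalIntegral.integral_const, smul_eq_mul]; ring
        _ ≤ _ := intervalIntegral.integral_mono_on zero_le_one intervalIntegrable_const
            (hfc.intervalIntegrable _ _) hle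
    · -- upper bound
      rcases lt_or_ge (2*N) r with hcase | hcase
      · -- pointwise case: 2N < r
        have hpos3 : 0 < (1 + r + N)/3 := by linarith
        have hle : ∀ t ∈ Set.Icc (0:ℝ) 1,
            (1 + ‖ξ + t • η‖) ^ q ≤ ((1 + r + N)/3) ^ q := by
          intro t ht
          have h2 := key2 t ht.1
          have h3 : t * N ≤ N := by nlinarith [ht.2, ht.1]
          exact Real.rpow_le_rpow_of_nonpos (by positivity) (by linarith) hq0.le
        have hint : (∫ t in (0:ℝ)..1, (1 + ‖ξ + t • η‖) ^ q) ≤ ((1 + r + N)/3) ^ q := by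
          calc (∫ t in (0:ℝ)..1, (1 + ‖ξ + t • η‖) ^ q)
              ≤ ∫ _t in (0:ℝ)..1, ((1 + r + N)/3) ^ q :=
                intervalIntegral.integral_mono_on zero_le_one (hfc.intervalIntegrable _ _)
                  intervalIntegrable_const hle
            _ = ((1 + r + N)/3) ^ q := by
                rw [intervalIntegral.integral_const, smul_eq_mul]; ring
        have heq : ((1 + r + N)/3) ^ q = (3:ℝ) ^ (-q) * (1 + r + N) ^ q := by
          rw [Real.div_rpow hA.le (by norm_num), Real.rpow_neg (by norm_num)]; ring
        rw [heq] at hint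
        nlinarith [mul_pos h4q hPq, mul_pos h8q hPq]
      rcases le_or_gt N 1 with hN1 | hN1
      · -- N ≤ 1
        have hle : ∀ t ∈ Set.Icc (0:ℝ) 1, (1 + ‖ξ + t • η‖) ^ q ≤ 1 := by
          intro t ht
          have h1 : (1 + ‖ξ + t • η‖) ^ q ≤ (1:ℝ) ^ q :=
            Real.rpow_le_rpow_of_nonpos one_pos
              (le_add_of_nonneg_right (norm_nonneg _)) hq0.le
          simpa using h1
        have hint : (∫ t in (0:ℝ)..1, (1 + ‖ξ + t • η‖) ^ q) ≤ 1 := by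
          calc (∫ t in (0:ℝ)..1, (1 + ‖ξ + t • η‖) ^ q)
              ≤ ∫ _t in (0:ℝ)..1, (1:ℝ) :=
                intervalIntegral.integral_mono_on zero_le_one (hfc.intervalIntegrable _ _)
                  intervalIntegrable_const hle
            _ = 1 := by simp
        have h4A : (4:ℝ) ^ q ≤ (1 + r + N) ^ q :=
          Real.rpow_le_rpow_of_nonpos hA (by linarith) hq0.le
        have h44 : (4:ℝ) ^ (-q) * (4:ℝ) ^ q = 1 := by
          rw [← Real.rpow_add (by norm_num)]; simp
        nlinarith [mul_pos h3q hPq, mul_pos h8q hPq, mul_le_mul_of_nonneg_left h4A h4q.le]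
      · -- main case : r ≤ 2N, 1 < N
        have hN0 : (0:ℝ) < N := by linarith
        have hA4N : 1 + r + N ≤ 4 * N := by linarith
        have hden : 0 < N * (q+1) := by positivity
        have hup : ∀ x : ℝ, 0 ≤ x → x ≤ 1 + r + N →
            x ^ (q+1) ≤ (1 + r + N) ^ q * (4*N) := by
          intro x hx hxA
          calc x ^ (q+1) ≤ (1 + r + N) ^ (q+1) := Real.rpow_le_rpow hx hxA hq1.le
            _ = (1 + r + N) ^ q * (1 + r + N) := Real.rpow_add_one hA.ne' q
            _ ≤ (1 + r + N) ^ q * (4*N) := by nlinarith [hPq]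
        have hc2N : 8 * ((1 + r + N) ^ q * N) ≤
            ((3:ℝ) ^ (-q) + (4:ℝ) ^ (-q) + 8/(q+1)) * (1 + r + N) ^ q * (N * (q+1)) := by
          have e : ((3:ℝ) ^ (-q) + (4:ℝ) ^ (-q) + 8/(q+1)) * (1 + r + N) ^ q * (N * (q+1))
              = ((3:ℝ) ^ (-q) * (1 + r + N) ^ q) * (N * (q+1))
                + ((4:ℝ) ^ (-q) * (1 + r + N) ^ q) * (N * (q+1))
                + 8 * ((1 + r + N) ^ q * N) := by
            field_simp
          rw [e]
          linarith [mul_pos (mul_pos h3q hPq) hden, mul_pos (mul_pos h4q hPq) hden]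
        rcases le_or_gt N r with hsub | hsub
        · -- N ≤ r : single affine comparison on [0,1]
          have hφpos : ∀ t ∈ Set.Icc (0:ℝ) 1, (0:ℝ) < -N*t + (1+r) := by
            intro t ht
            nlinarith [mul_le_mul_of_nonneg_left ht.2 hN0.le]
          have hφint : IntervalIntegrable (fun t => (-N*t + (1+r)) ^ q) volume 0 1 := by
            apply ContinuousOn.intervalIntegrable
            intro t ht
            rw [Set.uIcc_of_le zero_le_one] at ht
            exact (((continuous_const.mul continuous_id).add
              continuous_const).continuousAt.rpow_const
              (Or.inl (hφpos t ht).ne')).continuousWithinAt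
          have hle : ∀ t ∈ Set.Icc (0:ℝ) 1,
              (1 + ‖ξ + t • η‖) ^ q ≤ (-N*t + (1+r)) ^ q := by
            intro t ht
            exact Real.rpow_le_rpow_of_nonpos (hφpos t ht)
              (by have := key2 t ht.1; linarith) hq0.le
          have hint : (∫ t in (0:ℝ)..1, (1 + ‖ξ + t • η‖) ^ q)
              ≤ ∫ t in (0:ℝ)..1, (-N*t + (1+r)) ^ q :=
            intervalIntegral.integral_mono_on zero_le_one (hfc.intervalIntegrable _ _)
              hφint hle
          have heval : (∫ t in (0:ℝ)..1, (-N*t + (1+r)) ^ q)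
              = ((1+r) ^ (q+1) - (1+r-N) ^ (q+1)) / (N * (q+1)) := by
            rw [int_affine hq (neg_ne_zero.mpr hN0.ne') (1+r) 0 1]
            rw [show -N*1 + (1+r) = 1+r-N by ring, show -N*0 + (1+r) = 1+r by ring]
            rw [show -N*(q+1) = -(N*(q+1)) by ring, div_neg, ← neg_div, neg_sub]
          rw [heval] at hint
          have h1 : (1+r) ^ (q+1) ≤ (1 + r + N) ^ q * (4*N) :=
            hup _ (by linarith) (by linarith)
          have h2 : 0 ≤ (1+r-N) ^ (q+1) := Real.rpow_nonneg (by linarith) _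
          have hfin : ((1+r) ^ (q+1) - (1+r-N) ^ (q+1)) / (N * (q+1))
              ≤ ((3:ℝ) ^ (-q) + (4:ℝ) ^ (-q) + 8/(q+1)) * (1 + r + N) ^ q := by
            rw [div_le_iff₀ hden]
            nlinarith [mul_pos hPq hN0]
          linarith
        · -- r < N : split at t₀ = r/N
          set t₀ := r / N with ht₀def
          have ht₀0 : 0 ≤ t₀ := by positivity
          have ht₀1 : t₀ ≤ 1 := by rw [ht₀def, div_le_one hN0]; linarith
          have hNt₀ : N * t₀ = r := by rw [ht₀def]; field_simp
          have hsplit : (∫ t in (0:ℝ)..1, (1 + ‖ξ + t • η‖) ^ q)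
              = (∫ t in (0:ℝ)..t₀, (1 + ‖ξ + t • η‖) ^ q)
                + ∫ t in t₀..(1:ℝ), (1 + ‖ξ + t • η‖) ^ q :=
            (intervalIntegral.integral_add_adjacent_intervals
              (hfc.intervalIntegrable _ _) (hfc.intervalIntegrable _ _)).symm
          -- first piece
          have hφ1pos : ∀ t ∈ Set.Icc (0:ℝ) t₀, (0:ℝ) < -N*t + (1+r) := by
            intro t ht
            nlinarith [mul_le_mul_of_nonneg_left ht.2 hN0.le, hNt₀]
          have hφ1int : IntervalIntegrable (fun t => (-N*t + (1+r)) ^ q) volume 0 t₀ := by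
            apply ContinuousOn.intervalIntegrable
            intro t ht
            rw [Set.uIcc_of_le ht₀0] at ht
            exact (((continuous_const.mul continuous_id).add
              continuous_const).continuousAt.rpow_const
              (Or.inl (hφ1pos t ht).ne')).continuousWithinAt
          have hI1 : (∫ t in (0:ℝ)..t₀, (1 + ‖ξ + t • η‖) ^ q)
              ≤ ((1+r) ^ (q+1) - 1) / (N * (q+1)) := by
            have hle : ∀ t ∈ Set.Icc (0:ℝ) t₀,
                (1 + ‖ξ + t • η‖) ^ q ≤ (-N*t + (1+r)) ^ q := by
              intro t ht
              exact Real.rpow_le_rpow_of_nonpos (hφ1pos t ht)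
                (by have := key2 t ht.1; linarith) hq0.le
            have h := intervalIntegral.integral_mono_on ht₀0
              (hfc.intervalIntegrable _ _) hφ1int hle
            have heval : (∫ t in (0:ℝ)..t₀, (-N*t + (1+r)) ^ q)
                = ((1+r) ^ (q+1) - 1) / (N * (q+1)) := by
              rw [int_affine hq (neg_ne_zero.mpr hN0.ne') (1+r) 0 t₀]
              rw [show -N*t₀ + (1+r) = 1 by rw [neg_mul, hNt₀]; ring,
                show -N*0 + (1+r) = 1+r by ring, Real.one_rpow]
              rw [show -N*(q+1) = -(N*(q+1)) by ring, div_neg, ← neg_div, neg_sub]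
            linarith [heval ▸ h]
          -- second piece
          have hφ2pos : ∀ t ∈ Set.Icc t₀ (1:ℝ), (0:ℝ) < N*t + (1-r) := by
            intro t ht
            nlinarith [mul_le_mul_of_nonneg_left ht.1 hN0.le, hNt₀]
          have hφ2int : IntervalIntegrable (fun t => (N*t + (1-r)) ^ q) volume t₀ 1 := by
            apply ContinuousOn.intervalIntegrable
            intro t ht
            rw [Set.uIcc_of_le ht₀1] at ht
            exact (((continuous_const.mul continuous_id).add
              continuous_const).continuousAt.rpow_const
              (Or.inl (hφ2pos t ht).ne')).continuousWithinAt
          have hI2 : (∫ t in t₀..(1:ℝ), (1 + ‖ξ + t • η‖) ^ q)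
              ≤ ((1+N-r) ^ (q+1) - 1) / (N * (q+1)) := by
            have hle : ∀ t ∈ Set.Icc t₀ (1:ℝ),
                (1 + ‖ξ + t • η‖) ^ q ≤ (N*t + (1-r)) ^ q := by
              intro t ht
              exact Real.rpow_le_rpow_of_nonpos (hφ2pos t ht)
                (by have := key3 t (le_trans ht₀0 ht.1); linarith) hq0.le
            have h := intervalIntegral.integral_mono_on ht₀1
              (hfc.intervalIntegrable _ _) hφ2int hle
            have heval : (∫ t in t₀..(1:ℝ), (N*t + (1-r)) ^ q)
                = ((1+N-r) ^ (q+1) - 1) / (N * (q+1)) := by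
              rw [int_affine hq hN0.ne' (1-r) t₀ 1]
              rw [show N*t₀ + (1-r) = 1 by rw [hNt₀]; ring,
                show N*1 + (1-r) = 1+N-r by ring, Real.one_rpow]
            linarith [heval ▸ h]
          have h1 : (1+r) ^ (q+1) ≤ (1 + r + N) ^ q * (4*N) :=
            hup _ (by linarith) (by linarith)
          have h2 : (1+N-r) ^ (q+1) ≤ (1 + r + N) ^ q * (4*N) :=
            hup _ (by linarith) (by linarith)
          have hfin : ((1+r) ^ (q+1) - 1) / (N * (q+1)) + ((1+N-r) ^ (q+1) - 1) / (N * (q+1))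
              ≤ ((3:ℝ) ^ (-q) + (4:ℝ) ^ (-q) + 8/(q+1)) * (1 + r + N) ^ q := by
            rw [← add_div, div_le_iff₀ hden]
            nlinarith [mul_pos hPq hN0]
          linarith [hsplit ▸ (add_le_add hI1 hI2)]
end

section
/- Let A be an open subset of ℝ^n and λ a non-negative, increasing, finite set function defined on open subsets of A that is countably superadditive: Σᵢ λ(𝒪ᵢ) ≤ λ(⋃ᵢ 𝒪ᵢ) for every countable pairwise-disjoint family {𝒪ᵢ} of open subsets of A. Then for 0 < τ < n, the set E^τ := {x ∈ A : limsup_{ρ→0⁺} ρ^(−τ) λ(B_ρ(x)) > 0} has Hausdorff dimension at most τ. -/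
open Metric Filter Set MeasureTheory
open scoped ENNReal NNReal Topology

private lemma aux_measure_zero {n : ℕ} {A : Set (EuclideanSpace ℝ (Fin n))}
    {lam : Set (EuclideanSpace ℝ (Fin n)) → ENNReal} (hA : IsOpen A) (hfin : lam A < ⊤)
    (hmono : ∀ O₁ O₂, IsOpen O₁ → IsOpen O₂ → O₁ ⊆ O₂ → O₂ ⊆ A → lam O₁ ≤ lam O₂)
    (hsuper : ∀ O : ℕ → Set (EuclideanSpace ℝ (Fin n)),
      (∀ i, IsOpen (O i)) → (∀ i, O i ⊆ A) → Pairwise (Function.onFun Disjoint O) →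
      ∑' i, lam (O i) ≤ lam (⋃ i, O i))
    {τ d : ℝ} (hτ : 0 < τ) (hd : τ < d) (M : ℝ≥0∞) (hM : M ≠ ⊤)
    (E : Set (EuclideanSpace ℝ (Fin n)))
    (hE : ∀ x ∈ E, ∀ δ > (0:ℝ), ∃ ρ, 0 < ρ ∧ ρ ≤ δ ∧ ball x ρ ⊆ A ∧
      ENNReal.ofReal (ρ ^ τ) ≤ M * lam (ball x ρ)) :
    μH[d] E = 0 := by
  have hd0 : (0:ℝ) < d := hτ.trans hd
  rw [← nonpos_iff_eq_zero, MeasureTheory.Measure.hausdorffMeasure_apply]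
  refine iSup₂_le fun R hR => ?_
  refine ENNReal.le_of_forall_pos_le_add fun ε hε _ => ?_
  rw [zero_add]
  have hKtop : M * lam A ≠ ⊤ := ENNReal.mul_ne_top hM hfin.ne
  -- choose the scale δ
  obtain ⟨δ, ⟨hδC, hδR⟩, hδ0⟩ : ∃ δ : ℝ,
      (ENNReal.ofReal (8 ^ d * δ ^ (d - τ)) * (M * lam A) ≤ ε ∧ ENNReal.ofReal (8 * δ) ≤ R)
      ∧ δ ∈ Ioi (0:ℝ) := by
    have hc : Tendsto (fun δ : ℝ => δ ^ (d - τ)) (𝓝 0) (𝓝 0) := by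
      have := (Real.continuousAt_rpow_const 0 (d - τ) (Or.inr (by linarith))).tendsto
      rwa [Real.zero_rpow (by linarith : d - τ ≠ 0)] at this
    have h1 : Tendsto (fun δ : ℝ => ENNReal.ofReal (8 ^ d * δ ^ (d - τ)) * (M * lam A))
        (𝓝 0) (𝓝 0) := by
      have h2 : Tendsto (fun δ : ℝ => ENNReal.ofReal (8 ^ d * δ ^ (d - τ))) (𝓝 0) (𝓝 0) := by
        have := (ENNReal.continuous_ofReal.tendsto 0).comp
          (by simpa using hc.const_mul ((8:ℝ) ^ d))
        rwa [ENNReal.ofReal_zero] at this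
      simpa using ENNReal.Tendsto.mul_const h2 (Or.inr hKtop)
    have h3 : Tendsto (fun δ : ℝ => ENNReal.ofReal (8 * δ)) (𝓝 0) (𝓝 0) := by
      have := (ENNReal.continuous_ofReal.tendsto 0).comp
        (by simpa using (tendsto_id (x := 𝓝 (0:ℝ))).const_mul (8:ℝ))
      rwa [ENNReal.ofReal_zero] at this
    have hev : ∀ᶠ δ in nhdsWithin (0:ℝ) (Ioi 0),
        (ENNReal.ofReal (8 ^ d * δ ^ (d - τ)) * (M * lam A) ≤ ε ∧ ENNReal.ofReal (8 * δ) ≤ R) := by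
      have e1 := (h1.eventually_lt_const (show (0:ℝ≥0∞) < ε from ENNReal.coe_pos.2 hε)).mono
        fun x hx => hx.le
      have e2 := (h3.eventually_lt_const hR).mono fun x hx => hx.le
      exact ((e1.and e2).filter_mono nhdsWithin_le_nhds)
    exact (hev.and eventually_mem_nhdsWithin).exists
  have hδ0' : (0:ℝ) < δ := hδ0
  -- choose radii
  choose ρ hρ0 hρδ hρA hρlam using fun a : ↥E => hE ↑a a.2 δ hδ0'
  -- Vitali
  obtain ⟨u, -, udisj, hcov⟩ :=
    Vitali.exists_disjoint_subfamily_covering_enlargement_closedBall (univ : Set ↥E)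
      (fun a => (a : EuclideanSpace ℝ (Fin n))) ρ δ (fun a _ => hρδ a) 4 (by norm_num)
  have hucnt : u.Countable := by
    refine udisj.countable_of_nonempty_interior fun b _ => ⟨(b : EuclideanSpace ℝ (Fin n)), ?_⟩
    exact ball_subset_interior_closedBall (mem_ball_self (hρ0 b))
  obtain ⟨g, hg⟩ := Set.countable_iff_exists_injective.mp hucnt
  set t : ℕ → Set (EuclideanSpace ℝ (Fin n)) :=
    Function.extend g (fun b : ↥u => closedBall ((b : ↥E) : EuclideanSpace ℝ (Fin n)) (4 * ρ b)) (fun _ => (∅ : Set (EuclideanSpace ℝ (Fin n))))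
    with ht_def
  have ht_apply : ∀ b : ↥u, t (g b) = closedBall ((b : ↥E) : EuclideanSpace ℝ (Fin n)) (4 * ρ b) :=
    fun b => hg.extend_apply _ _ b
  have ht_off : ∀ k, (¬ ∃ b, g b = k) → t k = ∅ := fun k h => Function.extend_apply' _ _ _ h
  have hcov' : E ⊆ ⋃ k, t k := by
    intro z hz
    obtain ⟨b, hb, hsub⟩ := hcov ⟨z, hz⟩ (mem_univ _)
    refine mem_iUnion.2 ⟨g ⟨b, hb⟩, ?_⟩
    rw [ht_apply]
    exact hsub (mem_closedBall_self (hρ0 _).le)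
  have hdiam8 : ∀ b : ↥u, EMetric.diam (closedBall ((b : ↥E) : EuclideanSpace ℝ (Fin n)) (4 * ρ b))
      ≤ ENNReal.ofReal (8 * ρ b) := by
    intro b
    refine EMetric.diam_le fun z hz y hy => ?_
    rw [edist_dist]
    refine ENNReal.ofReal_le_ofReal ?_
    have h1 : dist z ((b : ↥E) : EuclideanSpace ℝ (Fin n)) ≤ 4 * ρ b := mem_closedBall.1 hz
    have h2 : dist y ((b : ↥E) : EuclideanSpace ℝ (Fin n)) ≤ 4 * ρ b := mem_closedBall.1 hy
    have h3 := dist_triangle z ((b : ↥E) : EuclideanSpace ℝ (Fin n)) y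
    have h4 : dist ((b : ↥E) : EuclideanSpace ℝ (Fin n)) y = dist y ((b : ↥E) : EuclideanSpace ℝ (Fin n)) := dist_comm _ _
    linarith
  have hdiamR : ∀ k, EMetric.diam (t k) ≤ R := by
    intro k
    by_cases h : ∃ b, g b = k
    · obtain ⟨b, rfl⟩ := h
      rw [ht_apply]
      refine le_trans (hdiam8 b) (le_trans (ENNReal.ofReal_le_ofReal ?_) hδR)
      have := hρδ (b : ↥E); linarith
    · rw [ht_off k h]; exact EMetric.diam_empty.le.trans zero_le
  refine le_trans (iInf_le_of_le t <| iInf_le_of_le hcov' <| iInf_le_of_le hdiamR le_rfl) ?_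
  -- bound the sum
  set c : ↥u → ℝ≥0∞ :=
    fun b => ENNReal.ofReal (8 ^ d * δ ^ (d - τ)) * (M * lam (ball ((b : ↥E) : EuclideanSpace ℝ (Fin n)) (ρ b)))
    with hc_def
  have hterm : ∀ k, (⨆ _ : (t k).Nonempty, EMetric.diam (t k) ^ d) ≤ Function.extend g c 0 k := by
    intro k
    by_cases h : ∃ b, g b = k
    · obtain ⟨b, rfl⟩ := h
      rw [ht_apply, hg.extend_apply]
      refine iSup_le fun _ => ?_
      have hρpos := hρ0 (b : ↥E)
      calc EMetric.diam (closedBall ((b : ↥E) : EuclideanSpace ℝ (Fin n)) (4 * ρ b)) ^ d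
          ≤ ENNReal.ofReal (8 * ρ b) ^ d := by
            exact ENNReal.rpow_le_rpow (hdiam8 b) hd0.le
        _ = ENNReal.ofReal ((8 * ρ b) ^ d) := ENNReal.ofReal_rpow_of_pos (by positivity)
        _ = ENNReal.ofReal (8 ^ d * (ρ b ^ (d - τ) * ρ b ^ τ)) := by
            rw [Real.mul_rpow (by norm_num) hρpos.le, ← Real.rpow_add hρpos, sub_add_cancel]
        _ ≤ ENNReal.ofReal ((8 ^ d * δ ^ (d - τ)) * ρ b ^ τ) := by
            refine ENNReal.ofReal_le_ofReal ?_
            rw [mul_assoc]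
            have h5 : ρ b ^ (d - τ) ≤ δ ^ (d - τ) :=
              Real.rpow_le_rpow hρpos.le (hρδ _) (by linarith)
            have h6 : (0:ℝ) ≤ ρ b ^ τ := (Real.rpow_pos_of_pos hρpos τ).le
            have h7 : (0:ℝ) ≤ (8:ℝ) ^ d := by positivity
            exact mul_le_mul_of_nonneg_left (mul_le_mul_of_nonneg_right h5 h6) h7
        _ = ENNReal.ofReal (8 ^ d * δ ^ (d - τ)) * ENNReal.ofReal (ρ b ^ τ) := by
            rw [ENNReal.ofReal_mul (by positivity)]
        _ ≤ c b := by simp only [hc_def]; exact mul_le_mul_right (hρlam _) _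
    · rw [Function.extend_apply' _ _ _ h, ht_off k h]
      simp
  have hsum : ∑' b : ↥u, lam (ball ((b : ↥E) : EuclideanSpace ℝ (Fin n)) (ρ b)) ≤ lam A := by
    set O : ℕ → Set (EuclideanSpace ℝ (Fin n)) :=
      Function.extend g (fun b : ↥u => ball ((b : ↥E) : EuclideanSpace ℝ (Fin n)) (ρ b)) (fun _ => (∅ : Set (EuclideanSpace ℝ (Fin n))))
      with hO_def
    have hOapp : ∀ b : ↥u, O (g b) = ball ((b : ↥E) : EuclideanSpace ℝ (Fin n)) (ρ b) := fun b => hg.extend_apply _ _ b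
    have hOopen : ∀ k, IsOpen (O k) := by
      intro k
      by_cases h : ∃ b, g b = k
      · obtain ⟨b, rfl⟩ := h; rw [hOapp]; exact isOpen_ball
      · rw [hO_def, Function.extend_apply' _ _ _ h]; exact isOpen_empty
    have hOsub : ∀ k, O k ⊆ A := by
      intro k
      by_cases h : ∃ b, g b = k
      · obtain ⟨b, rfl⟩ := h; rw [hOapp]; exact hρA _
      · rw [hO_def, Function.extend_apply' _ _ _ h]; exact empty_subset _
    have hOdisj : Pairwise (Function.onFun Disjoint O) := by
      intro j k hjk
      unfold Function.onFun
      by_cases hj : ∃ b, g b = j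
      · by_cases hk : ∃ b, g b = k
        · obtain ⟨b1, rfl⟩ := hj; obtain ⟨b2, rfl⟩ := hk
          rw [hOapp, hOapp]
          have hbne : b1 ≠ b2 := fun hbb => hjk (by rw [hbb])
          have hbne' : (b1 : ↥E) ≠ (b2 : ↥E) := Subtype.coe_injective.ne hbne
          exact (udisj b1.2 b2.2 hbne').mono ball_subset_closedBall ball_subset_closedBall
        · rw [hO_def, Function.extend_apply' _ _ _ hk]; exact disjoint_empty _
      · rw [hO_def, Function.extend_apply' _ _ _ hj]; exact empty_disjoint _
    calc ∑' b : ↥u, lam (ball ((b : ↥E) : EuclideanSpace ℝ (Fin n)) (ρ b)) = ∑' b : ↥u, lam (O (g b)) := by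
          exact tsum_congr fun b => by rw [hOapp]
      _ ≤ ∑' k, lam (O k) := ENNReal.tsum_comp_le_tsum_of_injective hg _
      _ ≤ lam (⋃ k, O k) := hsuper O hOopen hOsub hOdisj
      _ ≤ lam A := hmono _ _ (isOpen_iUnion hOopen) hA (iUnion_subset hOsub) subset_rfl
  calc ∑' k, (⨆ _ : (t k).Nonempty, EMetric.diam (t k) ^ d)
      ≤ ∑' k, Function.extend g c 0 k := ENNReal.tsum_le_tsum hterm
    _ = ∑' b : ↥u, c b := tsum_extend_zero hg c
    _ = ENNReal.ofReal (8 ^ d * δ ^ (d - τ)) *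
        (M * ∑' b : ↥u, lam (ball ((b : ↥E) : EuclideanSpace ℝ (Fin n)) (ρ b))) := by
        rw [hc_def, ENNReal.tsum_mul_left, ENNReal.tsum_mul_left]
    _ ≤ ENNReal.ofReal (8 ^ d * δ ^ (d - τ)) * (M * lam A) :=
        mul_le_mul_right (mul_le_mul_right hsum M) _
    _ ≤ ε := hδC


theorem stmt_15 (n : ℕ) (A : Set (EuclideanSpace ℝ (Fin n))) (hA : IsOpen A)
    (lam : Set (EuclideanSpace ℝ (Fin n)) → ENNReal)
    (hfin : ∀ O, IsOpen O → O ⊆ A → lam O < ⊤)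
    (hmono : ∀ O₁ O₂, IsOpen O₁ → IsOpen O₂ → O₁ ⊆ O₂ → O₂ ⊆ A → lam O₁ ≤ lam O₂)
    (hsuper : ∀ O : ℕ → Set (EuclideanSpace ℝ (Fin n)),
      (∀ i, IsOpen (O i)) → (∀ i, O i ⊆ A) → Pairwise (Function.onFun Disjoint O) →
      ∑' i, lam (O i) ≤ lam (⋃ i, O i))
    (τ : ℝ) (hτ : 0 < τ) (hτn : τ < n) :
    dimH {x | x ∈ A ∧
        0 < limsup (fun ρ : ℝ => ENNReal.ofReal (ρ ^ (-τ)) * lam (ball x ρ))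
          (nhdsWithin 0 (Ioi 0))} ≤ ENNReal.ofReal τ := by
  classical
  set Em : ℕ → Set (EuclideanSpace ℝ (Fin n)) := fun m =>
    {x | x ∈ A ∧ ∀ δ > (0:ℝ), ∃ ρ, 0 < ρ ∧ ρ ≤ δ ∧ ball x ρ ⊆ A ∧
      ENNReal.ofReal (ρ ^ τ) ≤ ((m:ℝ≥0∞) + 1) * lam (ball x ρ)} with hEm_def
  have hsub : {x | x ∈ A ∧
      0 < limsup (fun ρ : ℝ => ENNReal.ofReal (ρ ^ (-τ)) * lam (ball x ρ))
        (nhdsWithin 0 (Ioi 0))} ⊆ ⋃ m, Em m := by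
    rintro x ⟨hxA, hlim⟩
    obtain ⟨r, hr0, hrlt⟩ := ENNReal.lt_iff_exists_nnreal_btwn.1 hlim
    have hr0' : (r : ℝ≥0∞) ≠ 0 := by exact_mod_cast hr0.ne'
    obtain ⟨m, hm⟩ := ENNReal.exists_inv_nat_lt hr0'
    refine mem_iUnion.2 ⟨m, hxA, fun δ hδ => ?_⟩
    obtain ⟨εA, hεA0, hεA⟩ := Metric.isOpen_iff.1 hA x hxA
    have hfreq : ∃ᶠ ρ in nhdsWithin (0:ℝ) (Ioi 0),
        (r : ℝ≥0∞) < ENNReal.ofReal (ρ ^ (-τ)) * lam (ball x ρ) :=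
      frequently_lt_of_lt_limsup (by isBoundedDefault) hrlt
    have hmin : (0:ℝ) < min δ εA := lt_min hδ hεA0
    have hev : ∀ᶠ ρ in nhdsWithin (0:ℝ) (Ioi 0), ρ ∈ Ioi (0:ℝ) ∧ ρ < min δ εA :=
      eventually_mem_nhdsWithin.and
        (eventually_nhdsWithin_of_eventually_nhds (eventually_lt_nhds hmin))
    obtain ⟨ρ, hρr, hρ0, hρlt⟩ := (hfreq.and_eventually hev).exists
    have hρpos : (0:ℝ) < ρ := hρ0
    refine ⟨ρ, hρpos, le_of_lt (lt_of_lt_of_le hρlt (min_le_left _ _)),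
      (ball_subset_ball (le_of_lt (lt_of_lt_of_le hρlt (min_le_right _ _)))).trans hεA, ?_⟩
    set P := ENNReal.ofReal (ρ ^ τ) with hP
    have hPpos : P ≠ 0 := (ENNReal.ofReal_pos.2 (Real.rpow_pos_of_pos hρpos τ)).ne'
    have hPtop : P ≠ ⊤ := ENNReal.ofReal_ne_top
    have hneg : ENNReal.ofReal (ρ ^ (-τ)) = P⁻¹ := by
      rw [hP, Real.rpow_neg hρpos.le, ENNReal.ofReal_inv_of_pos (Real.rpow_pos_of_pos hρpos τ)]
    have h10 : ((m:ℝ≥0∞) + 1) ≠ 0 := by simp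
    have h1t : ((m:ℝ≥0∞) + 1) ≠ ⊤ := by simp
    have hm1 : ((m:ℝ≥0∞) + 1)⁻¹ ≤ P⁻¹ * lam (ball x ρ) := by
      calc ((m:ℝ≥0∞) + 1)⁻¹ ≤ (m:ℝ≥0∞)⁻¹ := ENNReal.inv_le_inv' le_self_add
        _ ≤ (r : ℝ≥0∞) := hm.le
        _ ≤ P⁻¹ * lam (ball x ρ) := by rw [← hneg]; exact hρr.le
    have hm1' : P * ((m:ℝ≥0∞) + 1)⁻¹ ≤ lam (ball x ρ) := by
      calc P * ((m:ℝ≥0∞) + 1)⁻¹ ≤ P * (P⁻¹ * lam (ball x ρ)) := mul_le_mul_right hm1 P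
        _ = lam (ball x ρ) := by rw [← mul_assoc, ENNReal.mul_inv_cancel hPpos hPtop, one_mul]
    calc P = ((m:ℝ≥0∞) + 1) * (P * ((m:ℝ≥0∞) + 1)⁻¹) := by
          rw [mul_comm P (((m:ℝ≥0∞) + 1)⁻¹), ← mul_assoc, ENNReal.mul_inv_cancel h10 h1t,
            one_mul]
      _ ≤ ((m:ℝ≥0∞) + 1) * lam (ball x ρ) := mul_le_mul_right hm1' _
  refine le_trans (dimH_mono hsub) ?_
  rw [dimH_iUnion]
  refine iSup_le fun m => ?_
  refine dimH_le fun d' hd' => ?_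
  by_contra hcon
  push_neg at hcon
  have hd'0 : (0:ℝ) < (d' : ℝ) := by
    have h0 : (0:ℝ≥0∞) < (d' : ℝ≥0∞) := lt_of_le_of_lt zero_le hcon
    exact_mod_cast h0
  have hτd : τ < (d' : ℝ) := by
    rw [← ENNReal.ofReal_coe_nnreal] at hcon
    exact (ENNReal.ofReal_lt_ofReal_iff hd'0).1 hcon
  have hzero := aux_measure_zero hA (hfin A hA subset_rfl) hmono hsuper hτ hτd
    ((m:ℝ≥0∞) + 1) (by simp) (Em m) (fun x hx => hx.2)
  rw [hzero] at hd'
  exact ENNReal.zero_ne_top hd'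
end
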